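/- Let G ∈ F[D]^{k×n} be a minimal encoder with CCF (A,B,C,E) and row degrees δ_1,…,δ_k, and let G' = diag(D^{δ_1},…,D^{δ_k}) · G(D^{−1}) be its reciprocal matrix. Then the CCF of G' is (A, B, C', E'), where (C'; E') = L · (C; E) with L = (R A^T, R B^T; B R, I − B B^T) ∈ F^{(δ+k)×(δ+k)} and R ∈ GL_δ(F) the block diagonal matrix whose i-th block R_i ∈ GL_{δ_i}(F) is the anti-identity (reversal) matrix; moreover L L^T = I_{δ+k}, so L ∈ GL_{δ+k}(F). -/
import Mathlib


open Polynomial Matrix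
open scoped Classical

noncomputable section

namespace ConvCode

variable (F : Type) [Field F] [Fintype F]

/-- Hamming weight of a vector. -/
def wt {n : ℕ} (a : Fin n → F) : ℕ := (Finset.univ.filter fun j => a j ≠ 0).card

/-- Weight enumerator of a set of vectors in `F^n`, as a polynomial in `ℂ[W]`. -/
def weSet {n : ℕ} (S : Set (Fin n → F)) : Polynomial ℂ :=
  ∑ a ∈ (Set.toFinite S).toFinset, (Polynomial.X : Polynomial ℂ) ^ wt F a

/-- The `i`-th row degree of a polynomial matrix. -/
def rowDeg {k n : ℕ} (G : Matrix (Fin k) (Fin n) (Polynomial F)) (i : Fin k) : ℕ :=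
  Finset.univ.sup fun j => (G i j).natDegree

/-- `G` is basic: it has a polynomial right inverse. -/
def IsBasic {k n : ℕ} (G : Matrix (Fin k) (Fin n) (Polynomial F)) : Prop :=
  ∃ H : Matrix (Fin n) (Fin k) (Polynomial F), G * H = 1

/-- The degree of the code: maximal degree of the `k × k` minors of `G`. -/
def codeDeg {k n : ℕ} (G : Matrix (Fin k) (Fin n) (Polynomial F)) : ℕ :=
  Finset.univ.sup fun f : Fin k ↪ Fin n => ((G.submatrix id f).det).natDegree

/-- A minimal (basic) encoder: the sum of the row degrees equals the degree of the code. -/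
def IsMinimalEncoder {k n : ℕ} (G : Matrix (Fin k) (Fin n) (Polynomial F)) : Prop :=
  IsBasic F G ∧ ∑ i, rowDeg F G i = codeDeg F G

/-- The convolutional code generated by the encoder `G`. -/
def code {k n : ℕ} (G : Matrix (Fin k) (Fin n) (Polynomial F)) : Set (Fin n → Polynomial F) :=
  Set.range fun u : Fin k → Polynomial F => u ᵥ* G

/-- The (module-theoretic) dual of a convolutional code. -/
def dualCode {n : ℕ} (𝓒 : Set (Fin n → Polynomial F)) : Set (Fin n → Polynomial F) :=
  {w | ∀ v ∈ 𝓒, w ⬝ᵥ v = 0}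

/-- The sequence-space pairing `⟨⟨v,w⟩⟩ = ∑_t v_t w_tᵀ`. -/
def seqPair {n : ℕ} (v w : Fin n → Polynomial F) : F :=
  ∑ j, ∑ t ∈ Finset.range ((v j).natDegree + 1), (v j).coeff t * (w j).coeff t

/-- The sequence space dual of a convolutional code. -/
def seqDual {n : ℕ} (𝓒 : Set (Fin n → Polynomial F)) : Set (Fin n → Polynomial F) :=
  {w | ∀ v ∈ 𝓒, ∀ l : ℕ, seqPair F v (fun j => Polynomial.X ^ l * w j) = 0}

/-- Index set of the state space of the controller canonical form:
a state index is a pair `(i, ν)` with `i` a row index and `ν < δ_i`. -/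
abbrev StateIdx (k : ℕ) (d : Fin k → ℕ) : Type := (i : Fin k) × Fin (d i)

/-- The state-transition matrix `A` of the controller canonical form. -/
def ccfA {k : ℕ} (d : Fin k → ℕ) : Matrix (StateIdx k d) (StateIdx k d) F :=
  Matrix.of fun s t => if s.1 = t.1 ∧ (s.2 : ℕ) + 1 = (t.2 : ℕ) then 1 else 0

/-- The input-to-state matrix `B` of the controller canonical form. -/
def ccfB {k : ℕ} (d : Fin k → ℕ) : Matrix (Fin k) (StateIdx k d) F :=
  Matrix.of fun i t => if t.1 = i ∧ (t.2 : ℕ) = 0 then 1 else 0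

/-- The state-to-output matrix `C` of the controller canonical form. -/
def ccfC {k n : ℕ} (d : Fin k → ℕ) (G : Matrix (Fin k) (Fin n) (Polynomial F)) :
    Matrix (StateIdx k d) (Fin n) F :=
  Matrix.of fun s j => (G s.1 j).coeff ((s.2 : ℕ) + 1)

/-- The matrix `E = G(0)` of the controller canonical form. -/
def ccfE {k n : ℕ} (G : Matrix (Fin k) (Fin n) (Polynomial F)) : Matrix (Fin k) (Fin n) F :=
  Matrix.of fun i j => (G i j).coeff 0

/-- The state index set of the controller canonical form of `G`. -/
abbrev States {k n : ℕ} (G : Matrix (Fin k) (Fin n) (Polynomial F)) : Type :=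
  StateIdx k (rowDeg F G)

def matA {k n : ℕ} (G : Matrix (Fin k) (Fin n) (Polynomial F)) :
    Matrix (States F G) (States F G) F := ccfA F (rowDeg F G)

def matB {k n : ℕ} (G : Matrix (Fin k) (Fin n) (Polynomial F)) :
    Matrix (Fin k) (States F G) F := ccfB F (rowDeg F G)

def matC {k n : ℕ} (G : Matrix (Fin k) (Fin n) (Polynomial F)) :
    Matrix (States F G) (Fin n) F := ccfC F (rowDeg F G) G

def matE {k n : ℕ} (G : Matrix (Fin k) (Fin n) (Polynomial F)) :
    Matrix (Fin k) (Fin n) F := ccfE F G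

/-- The weight adjacency matrix of a state space realization `(A,B,C,E)`. -/
def WAM {σ : Type} [Fintype σ] {k n : ℕ} (A : Matrix σ σ F) (B : Matrix (Fin k) σ F)
    (C : Matrix σ (Fin n) F) (E : Matrix (Fin k) (Fin n) F) :
    Matrix (σ → F) (σ → F) (Polynomial ℂ) :=
  Matrix.of fun X Y =>
    weSet F {v | ∃ u : Fin k → F, Y = X ᵥ* A + u ᵥ* B ∧ v = X ᵥ* C + u ᵥ* E}

/-- The weight adjacency matrix of an encoder `G` (via its controller canonical form). -/
def wam {k n : ℕ} (G : Matrix (Fin k) (Fin n) (Polynomial F)) :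
    Matrix (States F G → F) (States F G → F) (Polynomial ℂ) :=
  WAM F (matA F G) (matB F G) (matC F G) (matE F G)

/-- The block code `C_const = 𝓒 ∩ F^n` of constant codewords. -/
def constSet {k n : ℕ} (G : Matrix (Fin k) (Fin n) (Polynomial F)) : Set (Fin n → F) :=
  {w | (fun j => Polynomial.C (w j)) ∈ code F G}

/-- The block code `C_coeff` of coefficient vectors of codewords. -/
def coeffSet {k n : ℕ} (G : Matrix (Fin k) (Fin n) (Polynomial F)) : Set (Fin n → F) :=
  {w | ∃ v ∈ code F G, ∃ t : ℕ, ∀ j, (v j).coeff t = w j}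

/-- The dual of a block code. -/
def blockDual {n : ℕ} (S : Set (Fin n → F)) : Set (Fin n → F) :=
  {w | ∀ v ∈ S, w ⬝ᵥ v = 0}

/-- `Δ`: the set of state pairs `(X,Y)` admitting a transition `Y = XA + uB`. -/
def Delta {k n : ℕ} (G : Matrix (Fin k) (Fin n) (Polynomial F)) :
    Set ((States F G → F) × (States F G → F)) :=
  {p | ∃ u : Fin k → F, p.2 = p.1 ᵥ* matA F G + u ᵥ* matB F G}

/-- `Δ⁻ = {(0,Y) : Y ∈ im A}`. -/
def DeltaMinus {k n : ℕ} (G : Matrix (Fin k) (Fin n) (Polynomial F)) :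
    Set ((States F G → F) × (States F G → F)) :=
  {p | p.1 = 0 ∧ ∃ X : States F G → F, p.2 = X ᵥ* matA F G}

/-- `Ω = {(X,Y) ∈ Δ : XC + Y Bᵀ E ∈ C_const}`. -/
def Omega {k n : ℕ} (G : Matrix (Fin k) (Fin n) (Polynomial F)) :
    Set ((States F G → F) × (States F G → F)) :=
  {p | p ∈ Delta F G ∧
    p.1 ᵥ* matC F G + (p.2 ᵥ* (matB F G)ᵀ) ᵥ* matE F G ∈ constSet F G}

/-- Orthogonal of a set of state pairs with respect to the standard bilinear form on `F^{2δ}`. -/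
def pairPerp {σ : Type} [Fintype σ] (S : Set ((σ → F) × (σ → F))) :
    Set ((σ → F) × (σ → F)) :=
  {p | ∀ s ∈ S, p.1 ⬝ᵥ s.1 + p.2 ⬝ᵥ s.2 = 0}

/-- `S_0 = Bᵀ E` and `S_i = Bᵀ B A^{i-1} C` for `i ≥ 1`. -/
def Smat {k n : ℕ} (d : Fin k → ℕ) (G : Matrix (Fin k) (Fin n) (Polynomial F)) :
    ℕ → Matrix (StateIdx k d) (Fin n) F
  | 0 => (ccfB F d)ᵀ * ccfE F G
  | (i + 1) => (ccfB F d)ᵀ * ccfB F d * ccfA F d ^ i * ccfC F d G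

def Sm {k n : ℕ} (G : Matrix (Fin k) (Fin n) (Polynomial F)) :
    ℕ → Matrix (States F G) (Fin n) F := Smat F (rowDeg F G) G

/-- The matrix `N = ∑_{m≥2} ∑_{i=1}^{m-1} ∑_{j=0}^{i-1} (Âᵀ)^{i-1} Ŝ_j S_{m-j}ᵀ A^{m-(i+1)}`
(all summands with `m ≥ δ + δ̂` vanish, so the sum is truncated there). -/
def Nm {k kb n : ℕ} (G : Matrix (Fin k) (Fin n) (Polynomial F))
    (Gh : Matrix (Fin kb) (Fin n) (Polynomial F)) :
    Matrix (States F Gh) (States F G) F :=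
  ∑ m ∈ Finset.Icc 2 (Fintype.card (States F G) + Fintype.card (States F Gh)),
    ∑ i ∈ Finset.Icc 1 (m - 1), ∑ j ∈ Finset.range i,
      (matA F Gh)ᵀ ^ (i - 1) * Sm F Gh j * (Sm F G (m - j))ᵀ * matA F G ^ (m - (i + 1))

/-- The reciprocal matrix `G' = diag(D^{δ_1},…,D^{δ_k}) · G(D⁻¹)`. -/
def recip {k n : ℕ} (G : Matrix (Fin k) (Fin n) (Polynomial F)) :
    Matrix (Fin k) (Fin n) (Polynomial F) :=
  Matrix.of fun i j => (G i j).reflect (rowDeg F G i)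

/-- The block diagonal matrix `R` whose blocks are the anti-identity matrices. -/
def Rmat {k : ℕ} (d : Fin k → ℕ) : Matrix (StateIdx k d) (StateIdx k d) F :=
  Matrix.of fun s t => if s.1 = t.1 ∧ (s.2 : ℕ) + (t.2 : ℕ) + 1 = d s.1 then 1 else 0

/-- The MacWilliams matrix `𝓗 = q^{-δ/2} (ζ^{τ(X Yᵀ)})_{X,Y}`. -/
def macH (σ : Type) [Fintype σ] (p : ℕ) [Algebra (ZMod p) F] (ζ : ℂ) :
    Matrix (σ → F) (σ → F) ℂ :=
  Matrix.of fun X Y =>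
    (((Real.sqrt (Fintype.card F) : ℝ) : ℂ))⁻¹ ^ Fintype.card σ *
      ζ ^ (Algebra.trace (ZMod p) F (X ⬝ᵥ Y)).val

/-- The MacWilliams transform `H(f)(W) = (1+(q-1)W)^n f((1-W)/(1+(q-1)W))`
on polynomials of degree at most `n`. -/
def macWT (q n : ℕ) (f : Polynomial ℂ) : Polynomial ℂ :=
  ∑ j ∈ Finset.range (n + 1),
    Polynomial.C (f.coeff j) * (1 - Polynomial.X) ^ j *
      (1 + Polynomial.C ((q : ℂ) - 1) * Polynomial.X) ^ (n - j)

end ConvCode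


namespace Prop51Aux
open ConvCode

variable {F : Type} [Field F]

lemma sum_ite_unique {β : Type} [Fintype β] (f : β → F) (P : β → Prop)
    [inst : ∀ b, Decidable (P b)] (b0 : β) (h0 : P b0) (h1 : ∀ b, P b → b = b0) :
    (∑ b, if P b then f b else 0) = f b0 := by
  rw [Finset.sum_eq_single b0]
  · rw [if_pos h0]
  · intro b _ hb
    exact if_neg fun hP => hb (h1 b hP)
  · intro h; exact absurd (Finset.mem_univ b0) h

lemma sum_ite_empty {β : Type} [Fintype β] (f : β → F) (P : β → Prop)
    [inst : ∀ b, Decidable (P b)] (h : ∀ b, ¬ P b) :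
    (∑ b, if P b then f b else 0) = 0 := by
  rw [Finset.sum_eq_zero]
  intro b _
  exact if_neg (h b)

lemma sigma_ext {k : ℕ} {d : Fin k → ℕ} {s t : StateIdx k d}
    (h1 : s.1 = t.1) (h2 : (s.2 : ℕ) = (t.2 : ℕ)) : s = t := by
  obtain ⟨i, ν⟩ := s; obtain ⟨i', ν'⟩ := t
  dsimp at h1; subst h1
  exact congrArg _ (Fin.ext h2)

lemma Rmat_mul_apply {k : ℕ} (d : Fin k → ℕ) {β : Type} [Fintype β]
    (M : Matrix (StateIdx k d) β F) (s : StateIdx k d) (j : β) :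
    (Rmat F d * M) s j =
      M ⟨s.1, ⟨d s.1 - 1 - (s.2 : ℕ), by have := s.2.isLt; omega⟩⟩ j := by
  rw [Matrix.mul_apply]
  simp only [Rmat, Matrix.of_apply, ite_mul, one_mul, zero_mul]
  refine sum_ite_unique (fun u => M u j) _ _ ⟨rfl, by dsimp; have := s.2.isLt; omega⟩ ?_
  rintro u ⟨h1, h2⟩
  exact sigma_ext h1.symm (by dsimp; omega)

lemma AtC_apply {k n : ℕ} (d : Fin k → ℕ) (G : Matrix (Fin k) (Fin n) (Polynomial F))
    (u : StateIdx k d) (j : Fin n) :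
    ((ccfA F d)ᵀ * ccfC F d G) u j =
      if 1 ≤ (u.2 : ℕ) then (G u.1 j).coeff (u.2 : ℕ) else 0 := by
  rw [Matrix.mul_apply]
  simp only [ccfA, ccfC, Matrix.transpose_apply, Matrix.of_apply, ite_mul, one_mul, zero_mul]
  by_cases h : 1 ≤ (u.2 : ℕ)
  · rw [if_pos h]
    have hb : ((u.2 : ℕ) - 1) < d u.1 := by have := u.2.isLt; omega
    rw [sum_ite_unique (fun t => (G t.1 j).coeff ((t.2 : ℕ) + 1)) _ ⟨u.1, ⟨(u.2 : ℕ) - 1, hb⟩⟩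
      ⟨rfl, by dsimp; omega⟩ (fun t ht => sigma_ext ht.1 (by dsimp; omega))]
    dsimp
    congr 1
    omega
  · rw [if_neg h, sum_ite_empty]
    rintro t ⟨h1, h2⟩
    omega

lemma BtE_apply {k n : ℕ} (d : Fin k → ℕ) (G : Matrix (Fin k) (Fin n) (Polynomial F))
    (u : StateIdx k d) (j : Fin n) :
    ((ccfB F d)ᵀ * ccfE F G) u j = if (u.2 : ℕ) = 0 then (G u.1 j).coeff 0 else 0 := by
  rw [Matrix.mul_apply]
  simp only [ccfB, ccfE, Matrix.transpose_apply, Matrix.of_apply, ite_mul, one_mul, zero_mul]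
  by_cases h : (u.2 : ℕ) = 0
  · rw [if_pos h]
    exact sum_ite_unique (fun l => (G l j).coeff 0) _ u.1 ⟨rfl, h⟩ (fun l hl => hl.1.symm)
  · rw [if_neg h, sum_ite_empty]
    rintro l ⟨h1, h2⟩
    exact h h2

lemma B_mul_apply {k : ℕ} (d : Fin k → ℕ) {β : Type} [Fintype β]
    (M : Matrix (StateIdx k d) β F) (i : Fin k) (j : β) :
    (ccfB F d * M) i j = if h : 0 < d i then M ⟨i, ⟨0, h⟩⟩ j else 0 := by
  rw [Matrix.mul_apply]
  simp only [ccfB, Matrix.of_apply, ite_mul, one_mul, zero_mul]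
  split
  case isTrue h =>
    exact sum_ite_unique (fun t => M t j) _ ⟨i, ⟨0, h⟩⟩ ⟨rfl, rfl⟩
      (fun t ht => sigma_ext ht.1 ht.2)
  case isFalse h =>
    exact sum_ite_empty _ _ (fun t ht => h (ht.1 ▸ t.2.pos))

lemma BBt_apply {k : ℕ} (d : Fin k → ℕ) (i l : Fin k) :
    (ccfB F d * (ccfB F d)ᵀ) i l = if i = l ∧ 0 < d i then 1 else 0 := by
  rw [B_mul_apply]
  split
  case isTrue h =>
    by_cases hil : i = l
    · subst hil; simp [ccfB, h]
    · simp [ccfB, hil]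
  case isFalse h =>
    rw [if_neg (fun hc => h hc.2)]

lemma BBt_idem {k : ℕ} (d : Fin k → ℕ) :
    (ccfB F d * (ccfB F d)ᵀ) * (ccfB F d * (ccfB F d)ᵀ) = ccfB F d * (ccfB F d)ᵀ := by
  ext i j
  rw [Matrix.mul_apply, BBt_apply]
  simp only [BBt_apply, ite_mul, one_mul, zero_mul]
  by_cases h : 0 < d i
  · refine sum_ite_unique (fun l => if l = j ∧ 0 < d l then (1 : F) else 0) _ i ⟨rfl, h⟩
      (fun l hl => hl.1.symm)
  · rw [if_neg (fun hc => h hc.2), sum_ite_empty]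
    exact fun l hl => h hl.2

lemma BtB_apply {k : ℕ} (d : Fin k → ℕ) (u t : StateIdx k d) :
    ((ccfB F d)ᵀ * ccfB F d) u t = if u = t ∧ (u.2 : ℕ) = 0 then 1 else 0 := by
  rw [Matrix.mul_apply]
  simp only [ccfB, Matrix.transpose_apply, Matrix.of_apply, ite_mul, one_mul, zero_mul]
  by_cases h : (u.2 : ℕ) = 0
  · rw [sum_ite_unique (fun l => if t.1 = l ∧ (t.2 : ℕ) = 0 then (1 : F) else 0) _ u.1
      ⟨rfl, h⟩ (fun l hl => hl.1.symm)]
    by_cases h2 : u = t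
    · subst h2
      rw [if_pos ⟨rfl, h⟩, if_pos ⟨rfl, h⟩]
    · rw [if_neg (fun hc => h2 (sigma_ext hc.1.symm (by omega))), if_neg (fun hc => h2 hc.1)]
  · rw [if_neg (fun hc => h hc.2), sum_ite_empty]
    exact fun l hl => h hl.2

lemma BtBBt {k : ℕ} (d : Fin k → ℕ) :
    (ccfB F d)ᵀ * ccfB F d * (ccfB F d)ᵀ = (ccfB F d)ᵀ := by
  ext u l
  rw [Matrix.mul_apply]
  simp only [BtB_apply, ite_mul, one_mul, zero_mul]
  by_cases h : (u.2 : ℕ) = 0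
  · exact sum_ite_unique (fun t => (ccfB F d)ᵀ t l) _ u ⟨rfl, h⟩ (fun t ht => ht.1.symm)
  · rw [sum_ite_empty _ _ (fun t ht => h ht.2)]
    simp only [Matrix.transpose_apply, ccfB, Matrix.of_apply]
    rw [if_neg (fun hc => h hc.2)]

lemma AtA_apply {k : ℕ} (d : Fin k → ℕ) (u t : StateIdx k d) :
    ((ccfA F d)ᵀ * ccfA F d) u t = if u = t ∧ 1 ≤ (u.2 : ℕ) then 1 else 0 := by
  rw [Matrix.mul_apply]
  simp only [ccfA, Matrix.transpose_apply, Matrix.of_apply, ite_mul, one_mul, zero_mul]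
  by_cases h : 1 ≤ (u.2 : ℕ)
  · have hb : ((u.2 : ℕ) - 1) < d u.1 := by have := u.2.isLt; omega
    rw [sum_ite_unique (fun s => if s.1 = t.1 ∧ (s.2 : ℕ) + 1 = (t.2 : ℕ) then (1 : F) else 0)
      _ ⟨u.1, ⟨(u.2 : ℕ) - 1, hb⟩⟩ ⟨rfl, by dsimp; omega⟩
      (fun s hs => sigma_ext hs.1 (by dsimp; omega))]
    by_cases h2 : u = t
    · subst h2
      rw [if_pos ⟨rfl, by dsimp; omega⟩, if_pos ⟨rfl, h⟩]
    · rw [if_neg (fun hc => h2 (sigma_ext hc.1 (by have hb2 := hc.2; dsimp at hb2; omega))),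
        if_neg (fun hc => h2 hc.1)]
  · rw [if_neg (fun hc => h hc.2), sum_ite_empty]
    rintro s ⟨h1, h2⟩
    exact h (by omega)

lemma AtA_add_BtB {k : ℕ} (d : Fin k → ℕ) :
    (ccfA F d)ᵀ * ccfA F d + (ccfB F d)ᵀ * ccfB F d = 1 := by
  ext u t
  rw [Matrix.add_apply, AtA_apply, BtB_apply, Matrix.one_apply]
  by_cases h : u = t
  · subst h
    by_cases h2 : (u.2 : ℕ) = 0
    · rw [if_neg (fun hc => by omega), if_pos ⟨rfl, h2⟩, if_pos rfl, zero_add]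
    · rw [if_pos ⟨rfl, by omega⟩, if_neg (fun hc => h2 hc.2), if_pos rfl, add_zero]
  · rw [if_neg (fun hc => h hc.1), if_neg (fun hc => h hc.1), if_neg h, add_zero]

lemma Rmat_transpose {k : ℕ} (d : Fin k → ℕ) : (Rmat F d)ᵀ = Rmat F d := by
  ext s t
  simp only [Matrix.transpose_apply, Rmat, Matrix.of_apply]
  by_cases h : t.1 = s.1 ∧ (t.2 : ℕ) + (s.2 : ℕ) + 1 = d t.1
  · rw [if_pos h, if_pos ⟨h.1.symm, by have hd : d t.1 = d s.1 := congrArg d h.1; omega⟩]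
  · rw [if_neg h,
      if_neg (fun hc => h ⟨hc.1.symm, by have hd : d s.1 = d t.1 := congrArg d hc.1; omega⟩)]

lemma Rmat_mul_self {k : ℕ} (d : Fin k → ℕ) : Rmat F d * Rmat F d = 1 := by
  ext s t
  rw [Rmat_mul_apply, Matrix.one_apply]
  simp only [Rmat, Matrix.of_apply]
  have hlt := s.2.isLt
  by_cases h : s = t
  · subst h
    rw [if_pos ⟨rfl, by omega⟩, if_pos rfl]
  · rw [if_neg, if_neg h]
    rintro ⟨a, b⟩
    exact h (sigma_ext a (by omega))

lemma RBt_eq {k : ℕ} (d : Fin k → ℕ) :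
    Rmat F d * (ccfB F d)ᵀ =
      Matrix.of fun (s : StateIdx k d) (l : Fin k) =>
        if s.1 = l ∧ (s.2 : ℕ) + 1 = d s.1 then (1 : F) else 0 := by
  ext s l
  rw [Rmat_mul_apply]
  simp only [Matrix.transpose_apply, ccfB, Matrix.of_apply]
  have hlt := s.2.isLt
  by_cases h : s.1 = l ∧ (s.2 : ℕ) + 1 = d s.1
  · rw [if_pos h, if_pos ⟨h.1, by omega⟩]
  · rw [if_neg h, if_neg]
    rintro ⟨a, b⟩
    exact h ⟨a, by omega⟩

lemma AtRBt_zero {k : ℕ} (d : Fin k → ℕ) :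
    (ccfA F d)ᵀ * (Rmat F d * (ccfB F d)ᵀ) = 0 := by
  rw [RBt_eq]
  ext u l
  rw [Matrix.mul_apply, Matrix.zero_apply]
  simp only [ccfA, Matrix.transpose_apply, Matrix.of_apply, ite_mul, one_mul, zero_mul,
    ← ite_and]
  refine sum_ite_empty _ _ ?_
  rintro s ⟨⟨h1, h2⟩, h3, h4⟩
  have hu := u.2.isLt
  have hd : d s.1 = d u.1 := congrArg d h1
  omega

lemma hBBtB {k : ℕ} (d : Fin k → ℕ) :
    ccfB F d * (ccfB F d)ᵀ * ccfB F d = ccfB F d := by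
  have h := congrArg Matrix.transpose (BtBBt (F := F) d)
  rw [Matrix.transpose_mul, Matrix.transpose_mul, Matrix.transpose_transpose] at h
  rw [Matrix.mul_assoc]
  exact h

lemma hBRA {k : ℕ} (d : Fin k → ℕ) :
    ccfB F d * Rmat F d * ccfA F d = 0 := by
  have h := congrArg Matrix.transpose (AtRBt_zero (F := F) d)
  rw [Matrix.transpose_mul, Matrix.transpose_mul, Matrix.transpose_transpose,
    Matrix.transpose_transpose, Rmat_transpose, Matrix.transpose_zero] at h
  exact h

lemma blockTL {k : ℕ} (d : Fin k → ℕ) :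
    Rmat F d * (ccfA F d)ᵀ * (Rmat F d * (ccfA F d)ᵀ)ᵀ +
      Rmat F d * (ccfB F d)ᵀ * (Rmat F d * (ccfB F d)ᵀ)ᵀ = 1 := by
  rw [Matrix.transpose_mul, Matrix.transpose_mul, Matrix.transpose_transpose,
    Matrix.transpose_transpose, Rmat_transpose]
  have h2 : Rmat F d * (((ccfA F d)ᵀ * ccfA F d + (ccfB F d)ᵀ * ccfB F d) * Rmat F d) = 1 := by
    rw [AtA_add_BtB, Matrix.one_mul, Rmat_mul_self]
  simp only [Matrix.add_mul, Matrix.mul_add, Matrix.mul_assoc] at h2 ⊢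
  exact h2

lemma blockTR {k : ℕ} (d : Fin k → ℕ) :
    Rmat F d * (ccfA F d)ᵀ * (ccfB F d * Rmat F d)ᵀ +
      Rmat F d * (ccfB F d)ᵀ * (1 - ccfB F d * (ccfB F d)ᵀ)ᵀ = 0 := by
  rw [Matrix.transpose_mul, Rmat_transpose, Matrix.transpose_sub, Matrix.transpose_one,
    Matrix.transpose_mul, Matrix.transpose_transpose]
  have h2 : (ccfB F d)ᵀ * (ccfB F d * (ccfB F d)ᵀ) = (ccfB F d)ᵀ := by
    rw [← Matrix.mul_assoc]; exact BtBBt d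
  simp only [Matrix.mul_sub, Matrix.mul_one, Matrix.mul_assoc]
  rw [AtRBt_zero, Matrix.mul_zero, zero_add, h2, sub_self]

lemma blockBL {k : ℕ} (d : Fin k → ℕ) :
    ccfB F d * Rmat F d * (Rmat F d * (ccfA F d)ᵀ)ᵀ +
      (1 - ccfB F d * (ccfB F d)ᵀ) * (Rmat F d * (ccfB F d)ᵀ)ᵀ = 0 := by
  rw [Matrix.transpose_mul, Matrix.transpose_mul, Matrix.transpose_transpose,
    Matrix.transpose_transpose, Rmat_transpose]
  have h1 : ccfB F d * (Rmat F d * (ccfA F d * Rmat F d)) = 0 := by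
    rw [← Matrix.mul_assoc, ← Matrix.mul_assoc, hBRA, Matrix.zero_mul]
  have h2 : ccfB F d * ((ccfB F d)ᵀ * (ccfB F d * Rmat F d)) = ccfB F d * Rmat F d := by
    rw [← Matrix.mul_assoc, ← Matrix.mul_assoc, hBBtB]
  simp only [Matrix.sub_mul, Matrix.one_mul, Matrix.mul_assoc]
  rw [h1, h2, sub_self, add_zero]

lemma blockBR {k : ℕ} (d : Fin k → ℕ) :
    ccfB F d * Rmat F d * (ccfB F d * Rmat F d)ᵀ +
      (1 - ccfB F d * (ccfB F d)ᵀ) * (1 - ccfB F d * (ccfB F d)ᵀ)ᵀ = 1 := by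
  rw [Matrix.transpose_mul, Rmat_transpose, Matrix.transpose_sub, Matrix.transpose_one,
    Matrix.transpose_mul, Matrix.transpose_transpose]
  have h1 : ccfB F d * (Rmat F d * (Rmat F d * (ccfB F d)ᵀ)) = ccfB F d * (ccfB F d)ᵀ := by
    rw [← Matrix.mul_assoc (Rmat F d), Rmat_mul_self, Matrix.one_mul]
  have h2 : ccfB F d * ((ccfB F d)ᵀ * (ccfB F d * (ccfB F d)ᵀ)) = ccfB F d * (ccfB F d)ᵀ := by
    rw [← Matrix.mul_assoc, ← Matrix.mul_assoc, hBBtB]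
  simp only [Matrix.mul_sub, Matrix.sub_mul, Matrix.mul_one, Matrix.one_mul,
    Matrix.mul_assoc]
  rw [h1, h2]
  abel

end Prop51Aux

/-- Proposition 5.1: the controller canonical form of the reciprocal encoder `G'` is
`(A, B, C', E')` with `(C'; E') = L (C; E)`, where
`L = (RAᵀ, RBᵀ; BR, I − BBᵀ)` satisfies `L Lᵀ = I`, so `L ∈ GL_{δ+k}(F)`. -/
theorem statement18 {F : Type} [Field F] [Fintype F]
    (k n : ℕ) (G : Matrix (Fin k) (Fin n) (Polynomial F))
    (hG : ConvCode.IsMinimalEncoder F G)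
    (L : Matrix (ConvCode.States F G ⊕ Fin k) (ConvCode.States F G ⊕ Fin k) F)
    (hL : L = Matrix.fromBlocks
      (ConvCode.Rmat F (ConvCode.rowDeg F G) * (ConvCode.matA F G)ᵀ)
      (ConvCode.Rmat F (ConvCode.rowDeg F G) * (ConvCode.matB F G)ᵀ)
      (ConvCode.matB F G * ConvCode.Rmat F (ConvCode.rowDeg F G))
      (1 - ConvCode.matB F G * (ConvCode.matB F G)ᵀ)) :
    -- G' has the same row degrees, hence the same matrices A and B in its CCF
    ConvCode.rowDeg F (ConvCode.recip F G) = ConvCode.rowDeg F G ∧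
    -- C' = R Aᵀ C + R Bᵀ E
    ConvCode.ccfC F (ConvCode.rowDeg F G) (ConvCode.recip F G) =
      ConvCode.Rmat F (ConvCode.rowDeg F G) * (ConvCode.matA F G)ᵀ * ConvCode.matC F G +
        ConvCode.Rmat F (ConvCode.rowDeg F G) * (ConvCode.matB F G)ᵀ * ConvCode.matE F G ∧
    -- E' = B R C + (I − B Bᵀ) E
    ConvCode.ccfE F (ConvCode.recip F G) =
      ConvCode.matB F G * ConvCode.Rmat F (ConvCode.rowDeg F G) * ConvCode.matC F G +
        (1 - ConvCode.matB F G * (ConvCode.matB F G)ᵀ) * ConvCode.matE F G ∧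
    -- L Lᵀ = I, hence L ∈ GL_{δ+k}(F)
    L * Lᵀ = 1 ∧
    (∃ Linv, L * Linv = 1 ∧ Linv * L = 1) := by
  classical
  obtain ⟨⟨H, hH⟩, -⟩ := hG
  -- Every row of `G(0)` is nonzero since `G` is basic.
  have hE : ∀ i : Fin k, ∃ j, (G i j).coeff 0 ≠ 0 := by
    intro i
    by_contra hall
    push_neg at hall
    have h1 : (G.map (Polynomial.evalRingHom (0 : F))) *
        (H.map (Polynomial.evalRingHom (0 : F))) = 1 := by
      rw [← Matrix.map_mul, hH, Matrix.map_one _ (map_zero _) (map_one _)]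
    have h2 : ((G.map (Polynomial.evalRingHom (0 : F))) *
        (H.map (Polynomial.evalRingHom (0 : F)))) i i = 1 := by
      rw [h1, Matrix.one_apply_eq]
    rw [Matrix.mul_apply] at h2
    have h3 : (∑ j, (G.map (Polynomial.evalRingHom (0 : F))) i j *
        (H.map (Polynomial.evalRingHom (0 : F))) j i) = 0 := by
      refine Finset.sum_eq_zero fun j _ => ?_
      have hz : (G.map (Polynomial.evalRingHom (0 : F))) i j = 0 := by
        simp only [Matrix.map_apply, Polynomial.coe_evalRingHom]
        rw [← Polynomial.coeff_zero_eq_eval_zero]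
        exact hall j
      rw [hz, zero_mul]
    rw [h3] at h2
    exact zero_ne_one h2
  have hdle : ∀ i j, (G i j).natDegree ≤ ConvCode.rowDeg F G i := fun i j =>
    Finset.le_sup (f := fun j => (G i j).natDegree) (Finset.mem_univ j)
  have part1 : ConvCode.rowDeg F (ConvCode.recip F G) = ConvCode.rowDeg F G := by
    funext i
    show (Finset.univ.sup fun j => ((ConvCode.recip F G) i j).natDegree) = _
    apply le_antisymm
    · apply Finset.sup_le
      intro j _
      rw [Polynomial.natDegree_le_iff_coeff_eq_zero]
      intro N hN
      rw [ConvCode.recip, Matrix.of_apply, Polynomial.coeff_reflect,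
        Polynomial.revAt_eq_self_of_lt hN]
      exact Polynomial.coeff_eq_zero_of_natDegree_lt (lt_of_le_of_lt (hdle i j) hN)
    · obtain ⟨j, hj⟩ := hE i
      refine le_trans ?_ (Finset.le_sup (Finset.mem_univ j))
      apply Polynomial.le_natDegree_of_ne_zero
      rw [ConvCode.recip, Matrix.of_apply, Polynomial.coeff_reflect,
        Polynomial.revAt_le (le_refl _), Nat.sub_self]
      exact hj
  refine ⟨part1, ?_, ?_, ?_, ?_⟩
  · -- C' = R Aᵀ C + R Bᵀ E
    ext s j
    obtain ⟨i, ν⟩ := s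
    have hlt : (ν : ℕ) < ConvCode.rowDeg F G i := ν.isLt
    unfold ConvCode.matA ConvCode.matB ConvCode.matC ConvCode.matE
    rw [Matrix.add_apply, Matrix.mul_assoc, Matrix.mul_assoc,
      Prop51Aux.Rmat_mul_apply, Prop51Aux.Rmat_mul_apply,
      Prop51Aux.AtC_apply, Prop51Aux.BtE_apply]
    dsimp only
    simp only [ConvCode.ccfC, ConvCode.recip, Matrix.of_apply, Polynomial.coeff_reflect]
    rw [Polynomial.revAt_le (by omega)]
    by_cases hc : (ν : ℕ) + 1 = ConvCode.rowDeg F G i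
    · rw [if_neg (by omega), if_pos (by omega), zero_add]
      congr 1
      omega
    · rw [if_pos (by omega), if_neg (by omega), add_zero]
      congr 1
      omega
  · -- E' = B R C + (I - B Bᵀ) E
    ext i j
    unfold ConvCode.matB ConvCode.matC ConvCode.matE
    rw [Matrix.add_apply, Matrix.sub_mul, Matrix.one_mul, Matrix.sub_apply,
      Matrix.mul_assoc, Matrix.mul_assoc, Prop51Aux.B_mul_apply, Prop51Aux.B_mul_apply]
    by_cases h : 0 < ConvCode.rowDeg F G i
    · rw [dif_pos h, dif_pos h, Prop51Aux.Rmat_mul_apply, Prop51Aux.BtE_apply]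
      simp only [ConvCode.ccfC, ConvCode.ccfE, ConvCode.recip, Matrix.of_apply,
        Polynomial.coeff_reflect, Polynomial.revAt_zero]
      rw [if_pos trivial, sub_self, add_zero]
      congr 1
      omega
    · rw [dif_neg h, dif_neg h]
      simp only [ConvCode.ccfE, ConvCode.recip, Matrix.of_apply,
        Polynomial.coeff_reflect, Polynomial.revAt_zero]
      rw [zero_add, sub_zero]
      congr 1
      omega
  · -- L Lᵀ = 1
    rw [hL, Matrix.fromBlocks_transpose, Matrix.fromBlocks_multiply]
    unfold ConvCode.matA ConvCode.matB
    rw [Prop51Aux.blockTL, Prop51Aux.blockTR, Prop51Aux.blockBL, Prop51Aux.blockBR]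
    exact Matrix.fromBlocks_one
  · -- invertibility
    have hLLt : L * Lᵀ = 1 := by
      rw [hL, Matrix.fromBlocks_transpose, Matrix.fromBlocks_multiply]
      unfold ConvCode.matA ConvCode.matB
      rw [Prop51Aux.blockTL, Prop51Aux.blockTR, Prop51Aux.blockBL, Prop51Aux.blockBR]
      exact Matrix.fromBlocks_one
    exact ⟨Lᵀ, hLLt, mul_eq_one_comm.mp hLLt⟩
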